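/- (Tight coverage of the feasible set.) Suppose a_minⁱ < a_prevⁱ < a_maxⁱ for every i, and write R⁺ⁱ = min(δⁱ, a_maxⁱ − a_prevⁱ) and R⁻ⁱ = min(δⁱ, a_prevⁱ − a_minⁱ). Then the closure in ℝ^d of the image of the DD-SRad mapping φ equals the product box Π_i [a_prevⁱ − R⁻ⁱ, a_prevⁱ + R⁺ⁱ], and this box equals the feasible set F = {a ∈ ℝ^d : |aⁱ − a_prevⁱ| ≤ δⁱ for all i} ∩ Π_i [a_minⁱ, a_maxⁱ]. -/

import Mathlib

/-- The squashing function `f(t) = t / √(1 + t²)`. -/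
noncomputable def squash (t : ℝ) : ℝ := t / Real.sqrt (1 + t ^ 2)

/-- The per-dimension effective radius of DD-SRad. -/
noncomputable def Reff (δ amin amax aprev u : ℝ) : ℝ :=
  if 0 < u then min δ (amax - aprev)
  else if u < 0 then min δ (aprev - amin)
  else δ

/-- The DD-SRad mapping `φ : ℝᵈ → ℝᵈ` on Euclidean space. -/
noncomputable def ddsrad {d : ℕ} (δ amin amax aprev : Fin d → ℝ)
    (u : EuclideanSpace ℝ (Fin d)) : EuclideanSpace ℝ (Fin d) :=
  WithLp.toLp 2 (fun i => aprev i + Reff (δ i) (amin i) (amax i) (aprev i) (u i) * squash (u i))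



lemma sqrt_pos' (t : ℝ) : 0 < Real.sqrt (1 + t ^ 2) :=
  Real.sqrt_pos.2 (by positivity)

lemma abs_lt_sqrt (t : ℝ) : |t| < Real.sqrt (1 + t ^ 2) := by
  rw [← Real.sqrt_sq_eq_abs]
  exact Real.sqrt_lt_sqrt (by positivity) (by linarith)

lemma squash_mem (t : ℝ) : squash t ∈ Set.Ioo (-1 : ℝ) 1 := by
  have h := abs_lt_sqrt t
  have hd := sqrt_pos' t
  have h1 := abs_lt.1 h
  unfold squash
  constructor
  · rw [lt_div_iff₀ hd]; nlinarith [h1.1]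
  · rw [div_lt_one hd]; nlinarith [h1.2]

lemma squash_pos {t : ℝ} (h : 0 < t) : 0 < squash t := div_pos h (sqrt_pos' t)

lemma squash_neg {t : ℝ} (h : t < 0) : squash t < 0 :=
  div_neg_of_neg_of_pos h (sqrt_pos' t)

lemma squash_zero : squash 0 = 0 := by simp [squash]

lemma squash_inv {s : ℝ} (h1 : -1 < s) (h2 : s < 1) :
    squash (s / Real.sqrt (1 - s ^ 2)) = s := by
  have hpos : 0 < 1 - s ^ 2 := by nlinarith
  have hs : 0 < Real.sqrt (1 - s ^ 2) := Real.sqrt_pos.2 hpos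
  have hsq : Real.sqrt (1 - s ^ 2) ^ 2 = 1 - s ^ 2 := Real.sq_sqrt hpos.le
  have hkey : 1 + (s / Real.sqrt (1 - s ^ 2)) ^ 2 = (1 / Real.sqrt (1 - s ^ 2)) ^ 2 := by
    field_simp
    linarith [hsq]
  unfold squash
  rw [hkey, Real.sqrt_sq (by positivity)]
  field_simp

lemma closure_range_dim (δ amin amax aprev : ℝ) (hδ : 0 < δ)
    (h1 : amin < aprev) (h2 : aprev < amax) :
    closure (Set.range (fun u : ℝ =>
        aprev + Reff δ amin amax aprev u * squash u)) =
      Set.Icc (aprev - min δ (aprev - amin)) (aprev + min δ (amax - aprev)) := by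
  set Rm := min δ (aprev - amin) with hRmdef
  set Rp := min δ (amax - aprev) with hRpdef
  have hRm : 0 < Rm := lt_min hδ (by linarith)
  have hRp : 0 < Rp := lt_min hδ (by linarith)
  have hsubIcc : Set.range (fun u : ℝ =>
      aprev + Reff δ amin amax aprev u * squash u) ⊆
      Set.Icc (aprev - Rm) (aprev + Rp) := by
    rintro x ⟨u, rfl⟩
    dsimp only
    obtain ⟨hs1, hs2⟩ := squash_mem u
    rcases lt_trichotomy u 0 with hu | hu | hu
    · have hsn := squash_neg hu
      simp only [Reff]; rw [if_neg (by linarith), if_pos hu]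
      constructor <;> nlinarith [hRmdef, hRpdef]
    · subst hu
      rw [squash_zero]
      constructor <;> simp <;> linarith
    · have hsp := squash_pos hu
      simp only [Reff]; rw [if_pos hu]
      constructor <;> nlinarith [hRmdef, hRpdef]
  have hIoo : Set.Ioo (aprev - Rm) (aprev + Rp) ⊆ Set.range (fun u : ℝ =>
      aprev + Reff δ amin amax aprev u * squash u) := by
    rintro x ⟨hx1, hx2⟩
    rcases lt_trichotomy x aprev with hx | hx | hx
    · set s := (x - aprev) / Rm with hsdef
      have hs1 : -1 < s := by rw [hsdef, lt_div_iff₀ hRm]; linarith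
      have hs2 : s < 0 := by rw [hsdef]; exact div_neg_of_neg_of_pos (by linarith) hRm
      have hden : 0 < Real.sqrt (1 - s ^ 2) := Real.sqrt_pos.2 (by nlinarith)
      refine ⟨s / Real.sqrt (1 - s ^ 2), ?_⟩
      have hu : s / Real.sqrt (1 - s ^ 2) < 0 := div_neg_of_neg_of_pos hs2 hden
      simp only [Reff]
      rw [squash_inv hs1 (by linarith), if_neg (by linarith), if_pos hu, hsdef]
      field_simp
      rw [← hRmdef]; ring
    · exact ⟨0, by dsimp only; rw [squash_zero]; simpa using hx.symm⟩
    · set s := (x - aprev) / Rp with hsdef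
      have hs1 : 0 < s := by rw [hsdef]; exact div_pos (by linarith) hRp
      have hs2 : s < 1 := by rw [hsdef, div_lt_one hRp]; linarith
      have hden : 0 < Real.sqrt (1 - s ^ 2) := Real.sqrt_pos.2 (by nlinarith)
      refine ⟨s / Real.sqrt (1 - s ^ 2), ?_⟩
      have hu : 0 < s / Real.sqrt (1 - s ^ 2) := div_pos hs1 hden
      simp only [Reff]
      rw [squash_inv (by linarith) hs2, if_pos hu, hsdef]
      field_simp
      rw [← hRpdef]; ring
  apply subset_antisymm
  · calc closure (Set.range _) ⊆ closure (Set.Icc (aprev - Rm) (aprev + Rp)) :=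
          closure_mono hsubIcc
      _ = Set.Icc (aprev - Rm) (aprev + Rp) := isClosed_Icc.closure_eq
  · rw [← closure_Ioo (show aprev - Rm ≠ aprev + Rp by intro h; nlinarith)]
    exact closure_mono hIoo

/-- Tight coverage of the feasible set: with interior previous actions, the closure of
the image of the DD-SRad mapping equals the product box
`Πᵢ [aprevⁱ − R⁻ⁱ, aprevⁱ + R⁺ⁱ]`, which in turn equals the feasible set
`{a : |aⁱ − aprevⁱ| ≤ δⁱ, ∀i} ∩ Πᵢ [aminⁱ, amaxⁱ]`. -/
theorem ddsrad_tight_coverage (d : ℕ) (δ amin amax aprev : Fin d → ℝ)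
    (hδ : ∀ i, 0 < δ i)
    (hint : ∀ i, aprev i ∈ Set.Ioo (amin i) (amax i)) :
    closure (Set.range (ddsrad δ amin amax aprev)) =
      {a : EuclideanSpace ℝ (Fin d) | ∀ i,
        a i ∈ Set.Icc (aprev i - min (δ i) (aprev i - amin i))
                      (aprev i + min (δ i) (amax i - aprev i))} ∧
    {a : EuclideanSpace ℝ (Fin d) | ∀ i,
        a i ∈ Set.Icc (aprev i - min (δ i) (aprev i - amin i))
                      (aprev i + min (δ i) (amax i - aprev i))} =
      {a : EuclideanSpace ℝ (Fin d) | ∀ i, |a i - aprev i| ≤ δ i} ∩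
        {a : EuclideanSpace ℝ (Fin d) | ∀ i, a i ∈ Set.Icc (amin i) (amax i)} := by
  constructor
  · have hrange : Set.range (ddsrad δ amin amax aprev) =
        (PiLp.homeomorph 2 (fun _ : Fin d => ℝ)) ⁻¹' Set.pi Set.univ (fun i => Set.range (fun u : ℝ =>
          aprev i + Reff (δ i) (amin i) (amax i) (aprev i) u * squash u)) := by
      ext a
      constructor
      · rintro ⟨u, rfl⟩ i _
        exact ⟨u i, rfl⟩
      · intro h
        choose u hu using fun i => h i (Set.mem_univ i)
        exact ⟨WithLp.toLp 2 u, WithLp.ofLp_injective 2 (funext hu)⟩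
    rw [hrange]
    rw [← Homeomorph.preimage_closure]
    rw [closure_pi_set]
    ext a
    simp only [Set.mem_preimage, Set.mem_pi, Set.mem_univ, forall_true_left, Set.mem_setOf_eq]
    refine forall_congr' fun i => ?_
    rw [closure_range_dim (δ i) (amin i) (amax i) (aprev i) (hδ i)
      (hint i).1 (hint i).2]
    exact Iff.rfl
  · ext a
    simp only [Set.mem_setOf_eq, Set.mem_inter_iff, Set.mem_Icc]
    constructor
    · intro h
      refine ⟨fun i => ?_, fun i => ?_⟩
      · obtain ⟨hl, hr⟩ := h i
        rw [abs_le]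
        constructor
        · have := min_le_left (δ i) (aprev i - amin i); linarith
        · have := min_le_left (δ i) (amax i - aprev i); linarith
      · obtain ⟨hl, hr⟩ := h i
        constructor
        · have := min_le_right (δ i) (aprev i - amin i); linarith
        · have := min_le_right (δ i) (amax i - aprev i); linarith
    · rintro ⟨h1, h2⟩ i
      obtain ⟨hl, hr⟩ := abs_le.1 (h1 i)
      obtain ⟨hl2, hr2⟩ := h2 i
      constructor
      · have h3 : aprev i - a i ≤ min (δ i) (aprev i - amin i) :=
          le_min (by linarith) (by linarith)
        linarith
      · have h3 : a i - aprev i ≤ min (δ i) (amax i - aprev i) :=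
          le_min (by linarith) (by linarith)
        linarith
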